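/- Let n ≥ 1 and let 0 < ε < 1/2. Then there exist nonnegative integers x_1, …, x_n and nonnegative real numbers y_0, y_1, …, y_n such that x_1 = 2, y_0 = 1, x_i·y_i ≤ 1 − ε for i = 1, …, n, and x_{i+1}·y_i ≥ x_i·y_0 + ε for i = 1, …, n − 1. -/

import Mathlib

open scoped BigOperators

private def Xseq : ℕ → ℤ
  | 0 => 2
  | k + 1 => 3 * (Xseq k) ^ 2

private lemma Xseq_ge_two : ∀ k, 2 ≤ Xseq k := by
  intro k
  induction k with
  | zero => simp [Xseq]
  | succ k ih => simp only [Xseq]; nlinarith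

/-- The doubly-exponential example system admits, for every `0 < ε < 1/2`, an
assignment satisfying all its bilinear constraints with slack `ε`. -/
theorem stmt10 (n : ℕ) (hn : 1 ≤ n) (ε : ℝ) (hε0 : 0 < ε) (hε1 : ε < 1 / 2) :
    ∃ (x : ℕ → ℤ) (y : ℕ → ℝ),
      (∀ i, 1 ≤ i → i ≤ n → 0 ≤ x i) ∧
      (∀ i, i ≤ n → 0 ≤ y i) ∧
      x 1 = 2 ∧ y 0 = 1 ∧
      (∀ i, 1 ≤ i → i ≤ n → (x i : ℝ) * y i ≤ 1 - ε) ∧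
      (∀ i, 1 ≤ i → i ≤ n - 1 → (x i : ℝ) * y 0 + ε ≤ (x (i + 1) : ℝ) * y i) := by
  refine ⟨fun i => Xseq (i - 1),
    fun i => if i = 0 then 1 else (1 - ε) / (Xseq (i - 1) : ℝ), ?_, ?_, ?_, ?_, ?_, ?_⟩
  · intro i _ _; exact le_trans (by norm_num) (Xseq_ge_two _)
  · intro i _
    by_cases h : i = 0
    · simp [h]
    · simp only [h, if_false]
      have h2 : (2 : ℝ) ≤ (Xseq (i - 1) : ℝ) := by exact_mod_cast Xseq_ge_two _
      apply div_nonneg <;> linarith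
  · rfl
  · rfl
  · intro i hi _
    have h2 : (2 : ℝ) ≤ (Xseq (i - 1) : ℝ) := by exact_mod_cast Xseq_ge_two _
    have hne : (Xseq (i - 1) : ℝ) ≠ 0 := by linarith
    beta_reduce
    rw [if_neg (by omega : ¬ i = 0), mul_comm, div_mul_cancel₀ _ hne]
  · intro i hi _
    have hstep : Xseq i = 3 * (Xseq (i - 1)) ^ 2 := by
      have : i = (i - 1) + 1 := by omega
      rw [this]; rfl
    have h2 : (2 : ℝ) ≤ (Xseq (i - 1) : ℝ) := by exact_mod_cast Xseq_ge_two _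
    have hne : (Xseq (i - 1) : ℝ) ≠ 0 := by linarith
    beta_reduce
    simp only [Nat.add_sub_cancel, hstep, if_pos rfl]
    rw [if_neg (by omega : ¬ i = 0)]
    push_cast
    have key : 3 * ((Xseq (i-1) : ℝ))^2 * ((1 - ε) / (Xseq (i-1) : ℝ))
        = 3 * (Xseq (i-1) : ℝ) * (1 - ε) := by field_simp
    rw [mul_one, key]
    nlinarith
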